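/- Let T ∈ ℕ and consider a deterministic array (p_t, r_t, c_t)_{t=0}^{T} with p_t ∈ ℝ^L_{++}, interest rates r_t > −1, and c_t ∈ ℝ^L_+ \ {0}, and set ρ_0 = p_0 and ρ_t = p_t / ∏_{i=1}^{t} (1+r_i) for t ≥ 1. The array is ED-rationalizable if and only if there exist a concave, locally nonsatiated, continuous utility function u : ℝ^L_+ → ℝ, a discount factor d ∈ (0,1], and for each t ∈ {0,…,T} a supergradient ξ_t ∈ ∂u(c_t) such that d^t ξ_{t,j} ≤ ρ_{t,j} for every coordinate j = 1,…,L, with equality d^t ξ_{t,j} = ρ_{t,j} whenever c_{t,j} ≠ 0. -/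

import Mathlib

open MeasureTheory Filter Topology Finset

noncomputable section

/-- Vectors in ℝ^L with the Euclidean norm. -/
abbrev Vec (L : ℕ) := EuclideanSpace ℝ (Fin L)

/-- Inner product (dot product) of two vectors. -/
def dotp {L : ℕ} (p c : Vec L) : ℝ := ∑ j, p j * c j

/-- Componentwise nonnegative vectors: the set ℝ^L_+. -/
def NonnegV {L : ℕ} (c : Vec L) : Prop := ∀ j, 0 ≤ c j

/-- The consumption space ℝ^L_+ \ {0}. -/
def ConsV {L : ℕ} (c : Vec L) : Prop := NonnegV c ∧ c ≠ 0

/-- Componentwise strictly positive vectors: the set ℝ^L_{++}. -/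
def PosV {L : ℕ} (p : Vec L) : Prop := ∀ j, 0 < p j

/-- Concavity of u on its domain ℝ^L_+. -/
def IsConcaveNN {L : ℕ} (u : Vec L → ℝ) : Prop :=
  ∀ c c' : Vec L, NonnegV c → NonnegV c' → ∀ a : ℝ, 0 ≤ a → a ≤ 1 →
    a * u c + (1 - a) * u c' ≤ u (a • c + (1 - a) • c')

/-- Local nonsatiation of u on its domain ℝ^L_+. -/
def LocallyNonsatiatedNN {L : ℕ} (u : Vec L → ℝ) : Prop :=
  ∀ c : Vec L, NonnegV c → ∀ ε : ℝ, 0 < ε →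
    ∃ c' : Vec L, NonnegV c' ∧ ‖c' - c‖ < ε ∧ u c < u c'

/-- Continuity of u on its domain ℝ^L_+. -/
def ContinuousNN {L : ℕ} (u : Vec L → ℝ) : Prop := ContinuousOn u {c | NonnegV c}

/-- A concave, locally nonsatiated, continuous utility function on ℝ^L_+. -/
def NiceUtility {L : ℕ} (u : Vec L → ℝ) : Prop :=
  IsConcaveNN u ∧ LocallyNonsatiatedNN u ∧ ContinuousNN u

/-- ξ is a supergradient of u at c: u(c') − u(c) ≤ ξᵀ(c'−c) for all c' ∈ ℝ^L_+ \ {0}. -/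
def Supergrad {L : ℕ} (u : Vec L → ℝ) (c ξ : Vec L) : Prop :=
  ∀ c' : Vec L, ConsV c' → u c' - u c ≤ dotp ξ (c' - c)

/-- The compounding factor ∏_{i=1}^{t} (1 + r_i). -/
def Dfac (r : ℕ → ℝ) (t : ℕ) : ℝ := ∏ i ∈ Finset.Icc 1 t, (1 + r i)

/-- Effective (discounted) prices ρ_t = p_t / ∏_{i=1}^{t}(1 + r_i); in particular ρ_0 = p_0. -/
def effP {L T : ℕ} (r : ℕ → ℝ) (p : Fin (T + 1) → Vec L) (t : Fin (T + 1)) : Vec L :=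
  (Dfac r (t : ℕ))⁻¹ • p t

/-- ED-rationalizability: there exist a nice utility u, a discount factor d ∈ (0,1],
incomes y_t > 0, and initial assets a₀ ≥ 0 such that (c_t) maximizes Σ_t d^t u(z_t)
over nonnegative streams satisfying the intertemporal budget constraint
Σ_t ρ_tᵀ z_t = Σ_{t=1}^{T} y_t / ∏_{i=1}^{t}(1+r_i) + a₀. -/
def EDRat {L T : ℕ} (r : ℕ → ℝ) (p c : Fin (T + 1) → Vec L) : Prop :=
  ∃ u : Vec L → ℝ, ∃ d : ℝ, ∃ y : Fin (T + 1) → ℝ, ∃ a₀ : ℝ,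
    NiceUtility u ∧ 0 < d ∧ d ≤ 1 ∧ (∀ t, 0 < y t) ∧ 0 ≤ a₀ ∧
    (∑ t : Fin (T + 1), dotp (effP r p t) (c t)) =
      (∑ t : Fin (T + 1), if t = 0 then 0 else y t / Dfac r (t : ℕ)) + a₀ ∧
    ∀ z : Fin (T + 1) → Vec L, (∀ t, NonnegV (z t)) →
      (∑ t : Fin (T + 1), dotp (effP r p t) (z t)) =
        (∑ t : Fin (T + 1), if t = 0 then 0 else y t / Dfac r (t : ℕ)) + a₀ →
      (∑ t : Fin (T + 1), d ^ (t : ℕ) * u (z t)) ≤ ∑ t : Fin (T + 1), d ^ (t : ℕ) * u (c t)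
namespace EDaux

lemma exists_ne_zero {L : ℕ} {c : Vec L} (h : c ≠ 0) : ∃ j, c j ≠ 0 := by
  by_contra hall
  push_neg at hall
  exact h (PiLp.ext fun j => by simp [hall j])

lemma dotp_nonneg {L : ℕ} {p c : Vec L} (hp : ∀ j, 0 ≤ p j) (hc : NonnegV c) : 0 ≤ dotp p c :=
  Finset.sum_nonneg fun j _ => mul_nonneg (hp j) (hc j)

lemma dotp_pos {L : ℕ} {p c : Vec L} (hp : PosV p) (hc : ConsV c) : 0 < dotp p c := by
  obtain ⟨j, hj⟩ := exists_ne_zero hc.2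
  have hj' : 0 < c j := lt_of_le_of_ne (hc.1 j) (Ne.symm hj)
  exact Finset.sum_pos' (fun i _ => mul_nonneg (hp i).le (hc.1 i))
    ⟨j, Finset.mem_univ j, mul_pos (hp j) hj'⟩

lemma dotp_sub {L : ℕ} (p a b : Vec L) : dotp p (a - b) = dotp p a - dotp p b := by
  simp only [dotp, ← Finset.sum_sub_distrib]
  refine Finset.sum_congr rfl fun j _ => ?_
  have : (a - b) j = a j - b j := rfl
  rw [this]; ring

lemma dotp_smul_right {L : ℕ} (p x : Vec L) (a : ℝ) : dotp p (a • x) = a * dotp p x := by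
  simp only [dotp, Finset.mul_sum]
  refine Finset.sum_congr rfl fun j _ => ?_
  have : (a • x) j = a * x j := rfl
  rw [this]; ring

lemma dotp_smul_left {L : ℕ} (p x : Vec L) (a : ℝ) : dotp (a • p) x = a * dotp p x := by
  simp only [dotp, Finset.mul_sum]
  refine Finset.sum_congr rfl fun j _ => ?_
  have : (a • p) j = a * p j := rfl
  rw [this]; ring

end EDaux
namespace EDaux
lemma continuous_eval {L T : ℕ} (t : Fin (T + 1)) (j : Fin L) :
    Continuous (fun z : Fin (T + 1) → Vec L => z t j) :=
  ((EuclideanSpace.proj j : Vec L →L[ℝ] ℝ).continuous).comp (continuous_apply t)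

lemma continuous_cost {L T : ℕ} (ρ : Fin (T + 1) → Vec L) :
    Continuous (fun z : Fin (T + 1) → Vec L => ∑ t, dotp (ρ t) (z t)) := by
  refine continuous_finset_sum _ fun t _ => ?_
  simp only [dotp]
  exact continuous_finset_sum _ fun j _ => continuous_const.mul (continuous_eval t j)
end EDaux
namespace EDaux

lemma norm_le_of_bound {L : ℕ} (x : Vec L) (M : ℝ) (hM : 0 ≤ M) (h : ∀ j, |x j| ≤ M) :
    ‖x‖ ≤ Real.sqrt L * M := by
  rw [EuclideanSpace.norm_eq]
  have h1 : ∑ j, ‖x j‖ ^ 2 ≤ (L : ℝ) * M ^ 2 := by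
    calc ∑ j, ‖x j‖ ^ 2 ≤ ∑ _j : Fin L, M ^ 2 := by
          refine Finset.sum_le_sum fun j _ => ?_
          have := h j
          rw [Real.norm_eq_abs]
          nlinarith [abs_nonneg (x j)]
      _ = (L : ℝ) * M ^ 2 := by simp [Finset.sum_const, Finset.card_univ, mul_comm]
  calc Real.sqrt (∑ j, ‖x j‖ ^ 2) ≤ Real.sqrt ((L : ℝ) * M ^ 2) := Real.sqrt_le_sqrt h1
    _ = Real.sqrt L * M := by
        rw [Real.sqrt_mul (Nat.cast_nonneg L), Real.sqrt_sq hM]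

lemma bounded_K {L T : ℕ} (ρ : Fin (T + 1) → Vec L) (hρ : ∀ t, PosV (ρ t)) (w : ℝ) :
    Bornology.IsBounded
      {z : Fin (T + 1) → Vec L | (∀ t, NonnegV (z t)) ∧ ∑ t, dotp (ρ t) (z t) ≤ w} := by
  set M : ℝ := ∑ t : Fin (T + 1), ∑ j : Fin L, |w| / ρ t j with hMdef
  have hMnn : 0 ≤ M :=
    Finset.sum_nonneg fun t _ => Finset.sum_nonneg fun j _ =>
      div_nonneg (abs_nonneg w) (hρ t j).le
  rw [isBounded_iff_forall_norm_le]
  refine ⟨Real.sqrt L * M, fun z hz => ?_⟩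
  obtain ⟨hnn, hcost⟩ := hz
  rw [pi_norm_le_iff_of_nonneg (by positivity)]
  intro t
  refine norm_le_of_bound _ _ hMnn fun j => ?_
  have hterm : ρ t j * z t j ≤ w := by
    calc ρ t j * z t j ≤ dotp (ρ t) (z t) :=
          Finset.single_le_sum (f := fun j => ρ t j * z t j)
            (fun i _ => mul_nonneg (hρ t i).le (hnn t i)) (Finset.mem_univ j)
      _ ≤ ∑ s, dotp (ρ s) (z s) :=
          Finset.single_le_sum (f := fun s => dotp (ρ s) (z s))
            (fun s _ => dotp_nonneg (fun i => (hρ s i).le) (hnn s)) (Finset.mem_univ t)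
      _ ≤ w := hcost
  have h1 : z t j ≤ |w| / ρ t j := by
    rw [le_div_iff₀ (hρ t j)]
    calc z t j * ρ t j = ρ t j * z t j := by ring
      _ ≤ w := hterm
      _ ≤ |w| := le_abs_self w
  have h2 : |w| / ρ t j ≤ M := by
    calc |w| / ρ t j ≤ ∑ i : Fin L, |w| / ρ t i :=
          Finset.single_le_sum (f := fun i => |w| / ρ t i)
            (fun i _ => div_nonneg (abs_nonneg w) (hρ t i).le) (Finset.mem_univ j)
      _ ≤ M := Finset.single_le_sum (f := fun s => ∑ i : Fin L, |w| / ρ s i)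
            (fun s _ => Finset.sum_nonneg fun i _ => div_nonneg (abs_nonneg w) (hρ s i).le)
            (Finset.mem_univ t)
  rw [abs_le]
  exact ⟨by linarith [hnn t j, hMnn], le_trans h1 h2⟩

end EDaux
namespace EDaux

lemma isCompact_K {L T : ℕ} (ρ : Fin (T + 1) → Vec L) (hρ : ∀ t, PosV (ρ t)) (w : ℝ) :
    IsCompact {z : Fin (T + 1) → Vec L | (∀ t, NonnegV (z t)) ∧ ∑ t, dotp (ρ t) (z t) ≤ w} := by
  have hclosed : IsClosed {z : Fin (T + 1) → Vec L |
      (∀ t, NonnegV (z t)) ∧ ∑ t, dotp (ρ t) (z t) ≤ w} := by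
    have h1 : IsClosed {z : Fin (T + 1) → Vec L | ∀ t, NonnegV (z t)} := by
      have : {z : Fin (T + 1) → Vec L | ∀ t, NonnegV (z t)} =
          ⋂ t, ⋂ j, {z | 0 ≤ z t j} := by
        ext z; simp [NonnegV, Set.mem_iInter]
      rw [this]
      exact isClosed_iInter fun t => isClosed_iInter fun j =>
        isClosed_le continuous_const (continuous_eval t j)
    exact h1.inter (isClosed_le (continuous_cost ρ) continuous_const)
  exact Metric.isCompact_of_isClosed_isBounded hclosed (bounded_K ρ hρ w)

/-- Extension of the supergradient inequality to all nonnegative points (incl. 0),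
assuming continuity and L > 0. -/
lemma supergrad_ext {L : ℕ} (hL : 0 < L) {u : Vec L → ℝ} (hcont : ContinuousNN u)
    {c ξ : Vec L} (hsg : Supergrad u c ξ) (z : Vec L) (hz : NonnegV z) :
    u z - u c ≤ dotp ξ (z - c) := by
  by_cases hz0 : z = 0
  · subst hz0
    -- approximate 0 by (1/(n+1)) • o where o = all ones
    set o : Vec L := WithLp.toLp 2 (fun _ => (1 : ℝ)) with ho
    have hoC : ∀ n : ℕ, ConsV (((n : ℝ) + 1)⁻¹ • o) := by
      intro n
      constructor
      · intro j
        have : (((n : ℝ) + 1)⁻¹ • o) j = ((n : ℝ) + 1)⁻¹ * 1 := rfl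
        rw [this]; positivity
      · intro h0
        have := congrArg (fun v : Vec L => v ⟨0, hL⟩) h0
        have h1 : ((n : ℝ) + 1)⁻¹ * 1 = 0 := this
        have : (0:ℝ) < ((n : ℝ) + 1)⁻¹ := by positivity
        linarith
    have hineq : ∀ n : ℕ, u (((n : ℝ) + 1)⁻¹ • o) - u c ≤
        ((n : ℝ) + 1)⁻¹ * dotp ξ o - dotp ξ c := by
      intro n
      have := hsg _ (hoC n)
      rwa [dotp_sub, dotp_smul_right] at this
    -- limits
    have htend0 : Filter.Tendsto (fun n : ℕ => ((n : ℝ) + 1)⁻¹ • o) Filter.atTop (𝓝 (0 : Vec L)) := by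
      have h1 : Filter.Tendsto (fun n : ℕ => ((n : ℝ) + 1)⁻¹) Filter.atTop (𝓝 (0 : ℝ)) :=
        tendsto_one_div_add_atTop_nhds_zero_nat.congr (by intro n; rw [one_div])
      have := h1.smul_const (o : Vec L)
      simpa using this
    have htendu : Filter.Tendsto (fun n : ℕ => u (((n : ℝ) + 1)⁻¹ • o)) Filter.atTop
        (𝓝 (u 0)) := by
      have hmem : ∀ n : ℕ, ((n : ℝ) + 1)⁻¹ • o ∈ {c : Vec L | NonnegV c} := fun n => (hoC n).1
      have h0mem : (0 : Vec L) ∈ {c : Vec L | NonnegV c} := fun j => le_refl 0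
      have hcw : ContinuousWithinAt u {c : Vec L | NonnegV c} 0 := hcont 0 h0mem
      exact hcw.tendsto.comp (tendsto_nhdsWithin_iff.mpr
        ⟨htend0, Filter.Eventually.of_forall hmem⟩)
    have htendr : Filter.Tendsto (fun n : ℕ => ((n : ℝ) + 1)⁻¹ * dotp ξ o - dotp ξ c)
        Filter.atTop (𝓝 (0 * dotp ξ o - dotp ξ c)) := by
      have h1 : Filter.Tendsto (fun n : ℕ => ((n : ℝ) + 1)⁻¹) Filter.atTop (𝓝 (0 : ℝ)) :=
        tendsto_one_div_add_atTop_nhds_zero_nat.congr (by intro n; rw [one_div])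
      exact ((h1.mul_const _).sub tendsto_const_nhds)
    have hfinal : u 0 - u c ≤ 0 * dotp ξ o - dotp ξ c :=
      le_of_tendsto_of_tendsto' (htendu.sub tendsto_const_nhds) htendr hineq
    have : dotp ξ ((0 : Vec L) - c) = 0 * dotp ξ o - dotp ξ c := by
      rw [dotp_sub]
      have : dotp ξ (0 : Vec L) = 0 := by
        simp only [dotp]
        refine Finset.sum_eq_zero fun j _ => ?_
        have : (0 : Vec L) j = 0 := rfl
        rw [this, mul_zero]
      rw [this]; ring
    rw [this]
    exact hfinal
  · exact hsg z ⟨hz, hz0⟩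

end EDaux
namespace EDaux

lemma Dfac_pos {T : ℕ} (r : ℕ → ℝ) (hr : ∀ i, 1 ≤ i → i ≤ T → -1 < r i)
    (t : ℕ) (ht : t ≤ T) : 0 < Dfac r t := by
  refine Finset.prod_pos fun i hi => ?_
  rw [Finset.mem_Icc] at hi
  have := hr i hi.1 (le_trans hi.2 ht)
  linarith

lemma effP_apply {L T : ℕ} (r : ℕ → ℝ) (p : Fin (T + 1) → Vec L) (t : Fin (T + 1)) (j : Fin L) :
    effP r p t j = (Dfac r (t : ℕ))⁻¹ * p t j := rfl

lemma effP_pos {L T : ℕ} (r : ℕ → ℝ) (hr : ∀ i, 1 ≤ i → i ≤ T → -1 < r i)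
    (p : Fin (T + 1) → Vec L) (hp : ∀ t, PosV (p t)) (t : Fin (T + 1)) :
    PosV (effP r p t) := by
  intro j
  rw [effP_apply]
  have h1 : 0 < Dfac r (t : ℕ) := Dfac_pos r hr t (Nat.lt_succ_iff.mp t.isLt)
  exact mul_pos (inv_pos.mpr h1) (hp t j)

lemma backward {L T : ℕ} (p c : Fin (T + 1) → Vec L) (r : ℕ → ℝ)
    (hr : ∀ i, 1 ≤ i → i ≤ T → -1 < r i)
    (hp : ∀ t, PosV (p t)) (hc : ∀ t, ConsV (c t)) (hL : 0 < L)
    (u : Vec L → ℝ) (d : ℝ) (hu : NiceUtility u) (hd0 : 0 < d) (hd1 : d ≤ 1)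
    (hξ : ∀ t, ∃ ξ : Vec L, Supergrad u (c t) ξ ∧
          (∀ j, d ^ (t : ℕ) * ξ j ≤ effP r p t j) ∧
          (∀ j, c t j ≠ 0 → d ^ (t : ℕ) * ξ j = effP r p t j)) :
    EDRat r p c := by
  set ρ : Fin (T + 1) → Vec L := effP r p with hρdef
  have hρpos : ∀ t, PosV (ρ t) := effP_pos r hr p hp
  set W : ℝ := ∑ t, dotp (ρ t) (c t) with hWdef
  have hWpos : 0 < W :=
    Finset.sum_pos (fun t _ => dotp_pos (hρpos t) (hc t)) Finset.univ_nonempty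
  set q : ℝ := W / (2 * (T + 1)) with hqdef
  have hqpos : 0 < q := by
    apply div_pos hWpos; positivity
  set y : Fin (T + 1) → ℝ := fun t => Dfac r (t : ℕ) * q with hydef
  have hDpos : ∀ t : Fin (T + 1), 0 < Dfac r (t : ℕ) :=
    fun t => Dfac_pos r hr t (Nat.lt_succ_iff.mp t.isLt)
  have hypos : ∀ t, 0 < y t := fun t => mul_pos (hDpos t) hqpos
  set S : ℝ := ∑ t : Fin (T + 1), if t = 0 then 0 else y t / Dfac r (t : ℕ) with hSdef
  have hSeq : S = ∑ t : Fin (T + 1), if t = 0 then (0:ℝ) else q := by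
    refine Finset.sum_congr rfl fun t _ => ?_
    by_cases h : t = 0
    · simp [h]
    · simp only [h, if_false]
      show Dfac r (t : ℕ) * q / Dfac r (t : ℕ) = q
      rw [mul_comm, mul_div_assoc, div_self (hDpos t).ne', mul_one]
  have hSnn : 0 ≤ S := by
    rw [hSeq]
    exact Finset.sum_nonneg fun t _ => by by_cases h : t = 0 <;> simp [h, hqpos.le]
  have hSle : S ≤ W / 2 := by
    rw [hSeq]
    calc (∑ t : Fin (T + 1), if t = 0 then (0:ℝ) else q)
        ≤ ∑ _t : Fin (T + 1), q := by
          refine Finset.sum_le_sum fun t _ => ?_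
          by_cases h : t = 0 <;> simp [h, hqpos.le]
      _ = (T + 1) * q := by
          rw [Finset.sum_const, Finset.card_univ]
          simp [nsmul_eq_mul]
      _ = W / 2 := by
          rw [hqdef]; field_simp
  set a₀ : ℝ := W - S with ha₀def
  refine ⟨u, d, y, a₀, hu, hd0, hd1, hypos, by linarith, by rw [← hSdef]; ring, ?_⟩
  intro z hz hzbud
  rw [← hSdef] at hzbud
  have hzcost : ∑ t, dotp (ρ t) (z t) = W := by rw [hzbud]; ring
  -- supergradient argument
  have hmain : ∀ t : Fin (T + 1),
      d ^ (t : ℕ) * u (z t) - d ^ (t : ℕ) * u (c t) ≤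
        dotp (ρ t) (z t) - dotp (ρ t) (c t) := by
    intro t
    obtain ⟨ξ, hsg, hle, heq⟩ := hξ t
    have h1 : u (z t) - u (c t) ≤ dotp ξ (z t - c t) :=
      supergrad_ext hL hu.2.2 hsg (z t) (hz t)
    have h2 : d ^ (t : ℕ) * dotp ξ (z t - c t) ≤ dotp (ρ t) (z t) - dotp (ρ t) (c t) := by
      rw [← dotp_sub]
      simp only [dotp, Finset.mul_sum]
      refine Finset.sum_le_sum fun j _ => ?_
      have hsub : (z t - c t) j = z t j - c t j := rfl
      rw [hsub]
      by_cases hcj : c t j = 0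
      · have hzj : 0 ≤ z t j := hz t j
        have h4 := hle j
        rw [hcj, sub_zero]
        nlinarith
      · have h4 : d ^ (t : ℕ) * (ξ j * (z t j - c t j)) =
            (d ^ (t : ℕ) * ξ j) * (z t j - c t j) := by ring
        rw [h4, heq j hcj]
    calc d ^ (t : ℕ) * u (z t) - d ^ (t : ℕ) * u (c t)
        = d ^ (t : ℕ) * (u (z t) - u (c t)) := by ring
      _ ≤ d ^ (t : ℕ) * dotp ξ (z t - c t) :=
          mul_le_mul_of_nonneg_left h1 (pow_nonneg hd0.le _)
      _ ≤ dotp (ρ t) (z t) - dotp (ρ t) (c t) := h2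
  have hsum := Finset.sum_le_sum fun t (_ : t ∈ Finset.univ) => hmain t
  rw [Finset.sum_sub_distrib, Finset.sum_sub_distrib] at hsum
  rw [hzcost, ← hWdef] at hsum
  linarith

end EDaux
namespace EDaux

lemma dotp_add_right {L : ℕ} (p x y : Vec L) : dotp p (x + y) = dotp p x + dotp p y := by
  simp only [dotp, ← Finset.sum_add_distrib]
  refine Finset.sum_congr rfl fun j _ => ?_
  have : (x + y) j = x j + y j := rfl
  rw [this]; ring

lemma dotp_zero_right {L : ℕ} (p : Vec L) : dotp p (0 : Vec L) = 0 := by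
  simp only [dotp]
  refine Finset.sum_eq_zero fun j _ => ?_
  have : (0 : Vec L) j = 0 := rfl
  rw [this, mul_zero]

lemma coord_le_norm {L : ℕ} (x : Vec L) (j : Fin L) : |x j| ≤ ‖x‖ := by
  rw [EuclideanSpace.norm_eq]
  calc |x j| = Real.sqrt (‖x j‖ ^ 2) := by
        rw [Real.norm_eq_abs, Real.sqrt_sq_eq_abs, abs_abs]
    _ ≤ Real.sqrt (∑ i, ‖x i‖ ^ 2) :=
        Real.sqrt_le_sqrt (Finset.single_le_sum (f := fun i => ‖x i‖ ^ 2)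
          (fun i _ => sq_nonneg _) (Finset.mem_univ j))

lemma sum_update {ι β : Type*} [Fintype ι] [DecidableEq ι] (g : ι → β → ℝ) (z : ι → β)
    (t : ι) (v : β) :
    ∑ s, g s (Function.update z t v s) = (∑ s, g s (z s)) + g t v - g t (z t) := by
  have h1 := Finset.sum_erase_add Finset.univ (fun s => g s (Function.update z t v s))
    (Finset.mem_univ t)
  have h2 := Finset.sum_erase_add Finset.univ (fun s => g s (z s)) (Finset.mem_univ t)
  have h3 : ∑ s ∈ Finset.univ.erase t, g s (Function.update z t v s) =
      ∑ s ∈ Finset.univ.erase t, g s (z s) := by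
    refine Finset.sum_congr rfl fun s hs => ?_
    rw [Function.update_of_ne (Finset.ne_of_mem_erase hs)]
  have h4 : Function.update z t v t = v := Function.update_self t v z
  simp only [h4] at h1
  rw [h3] at h1
  linarith

end EDaux
namespace EDaux

lemma forward {L T : ℕ} (p c : Fin (T + 1) → Vec L) (r : ℕ → ℝ)
    (hr : ∀ i, 1 ≤ i → i ≤ T → -1 < r i)
    (hp : ∀ t, PosV (p t)) (hc : ∀ t, ConsV (c t)) (hL : 0 < L)
    (h : EDRat r p c) :
    ∃ u : Vec L → ℝ, ∃ d : ℝ, NiceUtility u ∧ 0 < d ∧ d ≤ 1 ∧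
      ∀ t, ∃ ξ : Vec L, Supergrad u (c t) ξ ∧
        (∀ j, d ^ (t : ℕ) * ξ j ≤ effP r p t j) ∧
        (∀ j, c t j ≠ 0 → d ^ (t : ℕ) * ξ j = effP r p t j) := by
  obtain ⟨u, d, y, a₀, hu, hd0, hd1, hy, ha₀, hbud, hmax⟩ := h
  set ρ : Fin (T + 1) → Vec L := effP r p with hρdef
  have hρpos : ∀ t, PosV (ρ t) := effP_pos r hr p hp
  set U : (Fin (T + 1) → Vec L) → ℝ := fun z => ∑ t : Fin (T + 1), d ^ (t : ℕ) * u (z t) with hUdef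
  set C : (Fin (T + 1) → Vec L) → ℝ := fun z => ∑ t, dotp (ρ t) (z t) with hCdef
  set W : ℝ := C c with hWdef
  have hWpos : 0 < W :=
    Finset.sum_pos (fun t _ => dotp_pos (hρpos t) (hc t)) Finset.univ_nonempty
  -- restated maximality
  have hmaxW : ∀ z : Fin (T + 1) → Vec L, (∀ t, NonnegV (z t)) → C z = W → U z ≤ U c := by
    intro z hz hzc
    apply hmax z hz
    calc (∑ t : Fin (T + 1), dotp (ρ t) (z t)) = C z := rfl
      _ = W := hzc
      _ = C c := rfl
      _ = _ := hbud
  -- the nonneg domain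
  set D : Set (Fin (T + 1) → Vec L) := {z | ∀ t, NonnegV (z t)} with hDdef
  have hUcont : ContinuousOn U D := by
    refine continuousOn_finset_sum _ fun t _ => ContinuousOn.mul continuousOn_const ?_
    refine ContinuousOn.comp hu.2.2 (continuous_apply t).continuousOn ?_
    intro z hz
    exact hz t
  -- budget sets
  set K : ℝ → Set (Fin (T + 1) → Vec L) := fun w => {z | (∀ t, NonnegV (z t)) ∧ C z ≤ w}
    with hKdef
  have hKcpt : ∀ w, IsCompact (K w) := fun w => isCompact_K ρ hρpos w
  have hKD : ∀ w, K w ⊆ D := fun w z hz => hz.1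
  have hKne : ∀ w, 0 ≤ w → (K w).Nonempty := by
    intro w hw
    refine ⟨0, fun t j => le_of_eq rfl, ?_⟩
    have : C 0 = 0 := by
      simp only [hCdef]
      exact Finset.sum_eq_zero fun t _ => dotp_zero_right (ρ t)
    rw [this]; exact hw
  have hbddA : ∀ w, BddAbove (U '' K w) := fun w =>
    ((hKcpt w).image_of_continuousOn (hUcont.mono (hKD w))).bddAbove
  set V : ℝ → ℝ := fun w => sSup (U '' K w) with hVdef
  have hVle : ∀ w, ∀ z ∈ K w, U z ≤ V w := fun w z hz =>
    le_csSup (hbddA w) ⟨z, hz, rfl⟩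
  have hVatt : ∀ w, 0 ≤ w → ∃ z ∈ K w, U z = V w := by
    intro w hw
    obtain ⟨z, hzK, hzmax⟩ := (hKcpt w).exists_isMaxOn (hKne w hw) (hUcont.mono (hKD w))
    refine ⟨z, hzK, le_antisymm (hVle w z hzK) ?_⟩
    exact csSup_le ((hKne w hw).image U) (by rintro x ⟨z', hz', rfl⟩; exact hzmax hz')
  have hVmono : ∀ w1 w2, 0 ≤ w1 → w1 ≤ w2 → V w1 ≤ V w2 := by
    intro w1 w2 hw1 hw12
    refine csSup_le_csSup (hbddA w2) ((hKne w1 hw1).image U) ?_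
    exact Set.image_mono fun z hz => ⟨hz.1, le_trans hz.2 hw12⟩
  have hCmem : ∀ z ∈ D, 0 ≤ C z := by
    intro z hz
    exact Finset.sum_nonneg fun t _ => dotp_nonneg (fun j => (hρpos t j).le) (hz t)
  -- concavity of V on Ici 0
  have hVconc : ConcaveOn ℝ (Set.Ici 0) V := by
    refine ⟨convex_Ici 0, ?_⟩
    intro w1 hw1 w2 hw2 a b ha hb hab
    simp only [smul_eq_mul]
    obtain ⟨z1, hz1K, hz1⟩ := hVatt w1 hw1
    obtain ⟨z2, hz2K, hz2⟩ := hVatt w2 hw2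
    have hb' : b = 1 - a := by linarith
    subst hb'
    set zm : Fin (T + 1) → Vec L := fun s => a • z1 s + (1 - a) • z2 s with hzm
    have hzmnn : ∀ s, NonnegV (zm s) := by
      intro s j
      have hco : zm s j = a * z1 s j + (1 - a) * z2 s j := rfl
      rw [hco]
      exact add_nonneg (mul_nonneg ha (hz1K.1 s j)) (mul_nonneg hb (hz2K.1 s j))
    have hzmC : C zm = a * C z1 + (1 - a) * C z2 := by
      simp only [hCdef, Finset.mul_sum, ← Finset.sum_add_distrib]
      refine Finset.sum_congr rfl fun s _ => ?_
      have hco : zm s = a • z1 s + (1 - a) • z2 s := rfl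
      rw [hco, dotp_add_right, dotp_smul_right, dotp_smul_right]
    have hzmK : zm ∈ K (a * w1 + (1 - a) * w2) := by
      refine ⟨hzmnn, ?_⟩
      rw [show C zm ≤ a * w1 + (1 - a) * w2 ↔ C zm ≤ a * w1 + (1 - a) * w2 from Iff.rfl, hzmC]
      have h1 := mul_le_mul_of_nonneg_left hz1K.2 ha
      have h2 := mul_le_mul_of_nonneg_left hz2K.2 hb
      linarith
    have hzmU : a * U z1 + (1 - a) * U z2 ≤ U zm := by
      simp only [hUdef, Finset.mul_sum, ← Finset.sum_add_distrib]
      refine Finset.sum_le_sum fun s _ => ?_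
      have hcv := hu.1 (z1 s) (z2 s) (hz1K.1 s) (hz2K.1 s) a ha (by linarith)
      have hco : zm s = a • z1 s + (1 - a) • z2 s := rfl
      rw [hco]
      calc a * (d ^ (s : ℕ) * u (z1 s)) + (1 - a) * (d ^ (s : ℕ) * u (z2 s))
          = d ^ (s : ℕ) * (a * u (z1 s) + (1 - a) * u (z2 s)) := by ring
        _ ≤ d ^ (s : ℕ) * u (a • z1 s + (1 - a) • z2 s) :=
            mul_le_mul_of_nonneg_left hcv (pow_nonneg hd0.le _)
    calc a * V w1 + (1 - a) * V w2 = a * U z1 + (1 - a) * U z2 := by rw [hz1, hz2]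
      _ ≤ U zm := hzmU
      _ ≤ V (a * w1 + (1 - a) * w2) := hVle _ zm hzmK
  -- V W = U c
  have hVWc : V W = U c := by
    have hcK : c ∈ K W := ⟨fun t => (hc t).1, le_refl (C c)⟩
    have hUcV : U c ≤ V W := hVle W c hcK
    obtain ⟨z, hzK, hzeq⟩ := hVatt W hWpos.le
    suffices hzc : C z = W by
      have := hmaxW z hzK.1 hzc
      exact le_antisymm (hzeq ▸ this) hUcV
    by_contra hne
    have hlt : C z < W := lt_of_le_of_ne hzK.2 hne
    have hne' : Nonempty (Fin L) := ⟨⟨0, hL⟩⟩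
    set P : ℝ := ∑ j : Fin L, ρ 0 j with hPdef
    have hP : 0 < P := Finset.sum_pos (fun j _ => hρpos 0 j) Finset.univ_nonempty
    set ε : ℝ := (W - C z) / P with hεdef
    have hε : 0 < ε := div_pos (by linarith) hP
    obtain ⟨c'', hc''nn, hc''dist, hc''lt⟩ := hu.2.1 (z 0) (hzK.1 0) ε hε
    set z' : Fin (T + 1) → Vec L := Function.update z 0 c'' with hz'def
    have hz'nn : ∀ s, NonnegV (z' s) := by
      intro s
      by_cases hs : s = 0
      · subst hs; rw [hz'def, Function.update_self]; exact hc''nn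
      · rw [hz'def, Function.update_of_ne hs]; exact hzK.1 s
    have hCz' : C z' = C z + dotp (ρ 0) c'' - dotp (ρ 0) (z 0) :=
      sum_update (ι := Fin (T + 1)) (fun s v => dotp (ρ s) v) z 0 c''
    have hdbound : dotp (ρ 0) c'' - dotp (ρ 0) (z 0) < W - C z := by
      rw [← dotp_sub]
      calc dotp (ρ 0) (c'' - z 0) ≤ ∑ j, ρ 0 j * ‖c'' - z 0‖ := by
            refine Finset.sum_le_sum fun j _ => ?_
            exact mul_le_mul_of_nonneg_left
              (le_trans (le_abs_self _) (coord_le_norm (c'' - z 0) j)) (hρpos 0 j).le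
        _ = P * ‖c'' - z 0‖ := by rw [← Finset.sum_mul]
        _ < P * ε := mul_lt_mul_of_pos_left hc''dist hP
        _ = W - C z := by rw [hεdef, mul_div_cancel₀ _ hP.ne']
    have hz'K : z' ∈ K W := ⟨hz'nn, by rw [hCz']; linarith⟩
    have hUz' : U z' = U z + u c'' - u (z 0) := by
      have h0 := sum_update (ι := Fin (T + 1)) (fun s v => d ^ (s : ℕ) * u v) z 0 c''
      simp only [Fin.val_zero, pow_zero, one_mul] at h0
      exact h0
    have h1 : U z' ≤ V W := hVle W z' hz'K
    rw [hUz', ← hzeq] at h1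
    linarith
  -- the multiplier
  set Slopes : Set ℝ := (fun w => (V w - V W) / (w - W)) '' Set.Ioi W with hSldef
  have hSlne : Slopes.Nonempty := ⟨_, ⟨W + 1, by simp, rfl⟩⟩
  have hSlbdd : BddAbove Slopes := by
    refine ⟨(V W - V 0) / (W - 0), ?_⟩
    rintro s ⟨w, hw, rfl⟩
    exact hVconc.slope_anti_adjacent (Set.self_mem_Ici)
      (Set.mem_Ici.mpr (by linarith [Set.mem_Ioi.mp hw])) hWpos (Set.mem_Ioi.mp hw)
  set lam : ℝ := sSup Slopes with hlamdef
  have hlamsup : ∀ w, 0 ≤ w → V w ≤ V W + lam * (w - W) := by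
    intro w hw
    rcases lt_trichotomy w W with hlt | heq | hgt
    · have hcs : lam ≤ (V W - V w) / (W - w) := by
        refine csSup_le hSlne ?_
        rintro s ⟨w', hw', rfl⟩
        exact hVconc.slope_anti_adjacent (Set.mem_Ici.mpr hw)
          (Set.mem_Ici.mpr (by linarith [Set.mem_Ioi.mp hw'])) hlt (Set.mem_Ioi.mp hw')
      have h2 : lam * (W - w) ≤ V W - V w :=
        (le_div_iff₀ (by linarith : (0:ℝ) < W - w)).mp hcs
      nlinarith
    · rw [heq]; simp
    · have hs : (V w - V W) / (w - W) ≤ lam :=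
        le_csSup hSlbdd ⟨w, Set.mem_Ioi.mpr hgt, rfl⟩
      have h2 := (div_le_iff₀ (by linarith : (0:ℝ) < w - W)).mp hs
      linarith
  have hlampos : 0 < lam := by
    obtain ⟨c'', hc''nn, _, hc''lt⟩ := hu.2.1 (c 0) ((hc 0).1) 1 one_pos
    set z' : Fin (T + 1) → Vec L := Function.update c 0 c'' with hz'def
    have hz'nn : ∀ s, NonnegV (z' s) := by
      intro s
      by_cases hs : s = 0
      · subst hs; rw [hz'def, Function.update_self]; exact hc''nn
      · rw [hz'def, Function.update_of_ne hs]; exact (hc s).1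
    set w' : ℝ := max (C z') W + 1 with hw'def
    have hWw' : W < w' := by
      have := le_max_right (C z') W
      rw [hw'def]; linarith
    have hz'K : z' ∈ K w' := by
      refine ⟨hz'nn, ?_⟩
      have := le_max_left (C z') W
      rw [hw'def]; linarith
    have hUz' : U z' = U c + u c'' - u (c 0) := by
      have h0 := sum_update (ι := Fin (T + 1)) (fun s v => d ^ (s : ℕ) * u v) c 0 c''
      simp only [Fin.val_zero, pow_zero, one_mul] at h0
      exact h0
    have hVlt : V W < V w' := by
      have h1 : U z' ≤ V w' := hVle w' z' hz'K
      rw [hVWc]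
      linarith
    have hslope : 0 < (V w' - V W) / (w' - W) := div_pos (by linarith) (by linarith)
    have hs : (V w' - V W) / (w' - W) ≤ lam :=
      le_csSup hSlbdd ⟨w', Set.mem_Ioi.mpr hWw', rfl⟩
    linarith
  -- Lagrangian inequality
  have hLag : ∀ z : Fin (T + 1) → Vec L, (∀ t, NonnegV (z t)) →
      U z ≤ U c + lam * (C z - W) := by
    intro z hz
    have h1 : U z ≤ V (C z) := hVle (C z) z ⟨hz, le_refl _⟩
    have h2 : V (C z) ≤ V W + lam * (C z - W) := hlamsup (C z) (hCmem z hz)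
    rw [hVWc] at h2
    linarith
  -- conclusion
  refine ⟨fun x => u x / lam, d, ⟨?_, ?_, ?_⟩, hd0, hd1, ?_⟩
  · intro x x' hx hx' a ha0 ha1
    have h1 := hu.1 x x' hx hx' a ha0 ha1
    show a * (u x / lam) + (1 - a) * (u x' / lam) ≤ u (a • x + (1 - a) • x') / lam
    have h3 : a * (u x / lam) + (1 - a) * (u x' / lam) =
        (a * u x + (1 - a) * u x') / lam := by ring
    rw [h3]
    gcongr
  · intro x hx ε hε
    obtain ⟨x', hx', hdist, hlt⟩ := hu.2.1 x hx ε hε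
    refine ⟨x', hx', hdist, ?_⟩
    show u x / lam < u x' / lam
    gcongr
  · exact hu.2.2.div_const lam
  · intro t
    refine ⟨(d ^ (t : ℕ))⁻¹ • ρ t, ?_, ?_, ?_⟩
    · intro c' hc'
      have hz : ∀ s, NonnegV (Function.update c t c' s) := by
        intro s
        by_cases hst : s = t
        · subst hst; rw [Function.update_self]; exact hc'.1
        · rw [Function.update_of_ne hst]; exact (hc s).1
      have hUz : U (Function.update c t c') = U c + d ^ (t : ℕ) * u c' - d ^ (t : ℕ) * u (c t) :=
        sum_update (ι := Fin (T + 1)) (fun s v => d ^ (s : ℕ) * u v) c t c'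
      have hCz : C (Function.update c t c') = W + (dotp (ρ t) c' - dotp (ρ t) (c t)) := by
        have := sum_update (ι := Fin (T + 1)) (fun s v => dotp (ρ s) v) c t c'
        rw [show W + (dotp (ρ t) c' - dotp (ρ t) (c t)) =
          W + dotp (ρ t) c' - dotp (ρ t) (c t) from by ring]
        exact this
      have hlag := hLag (Function.update c t c') hz
      rw [hUz, hCz] at hlag
      have hdt : (0 : ℝ) < d ^ (t : ℕ) := pow_pos hd0 _
      have key : d ^ (t : ℕ) * u c' - d ^ (t : ℕ) * u (c t) ≤
          lam * (dotp (ρ t) c' - dotp (ρ t) (c t)) := by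
        have h5 : W + (dotp (ρ t) c' - dotp (ρ t) (c t)) - W =
            dotp (ρ t) c' - dotp (ρ t) (c t) := by ring
        rw [h5] at hlag
        linarith
      show u c' / lam - u (c t) / lam ≤ dotp ((d ^ (t : ℕ))⁻¹ • ρ t) (c' - c t)
      rw [dotp_smul_left, dotp_sub, div_sub_div_same, div_le_iff₀ hlampos]
      calc u c' - u (c t)
          = (d ^ (t : ℕ))⁻¹ * (d ^ (t : ℕ) * u c' - d ^ (t : ℕ) * u (c t)) := by
            field_simp
        _ ≤ (d ^ (t : ℕ))⁻¹ * (lam * (dotp (ρ t) c' - dotp (ρ t) (c t))) :=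
            mul_le_mul_of_nonneg_left key (inv_nonneg.mpr hdt.le)
        _ = (d ^ (t : ℕ))⁻¹ * (dotp (ρ t) c' - dotp (ρ t) (c t)) * lam := by ring
    · intro j
      have : ((d ^ (t : ℕ))⁻¹ • ρ t) j = (d ^ (t : ℕ))⁻¹ * ρ t j := rfl
      rw [this, ← mul_assoc, mul_inv_cancel₀ (pow_pos hd0 (t : ℕ)).ne', one_mul]
    · intro j _
      have : ((d ^ (t : ℕ))⁻¹ • ρ t) j = (d ^ (t : ℕ))⁻¹ * ρ t j := rfl
      rw [this, ← mul_assoc, mul_inv_cancel₀ (pow_pos hd0 (t : ℕ)).ne', one_mul]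

end EDaux

/-- the array (p_t, r_t, c_t) is ED-rationalizable iff there exist a concave,
locally nonsatiated, continuous u, a discount factor d ∈ (0,1], and for each t a
supergradient ξ_t ∈ ∂u(c_t) with d^t ξ_{t,j} ≤ ρ_{t,j} for all j, with equality
whenever c_{t,j} ≠ 0. -/
theorem stmt_1 {L T : ℕ} (p c : Fin (T + 1) → Vec L) (r : ℕ → ℝ)
    (hr : ∀ i, 1 ≤ i → i ≤ T → -1 < r i)
    (hp : ∀ t, PosV (p t)) (hc : ∀ t, ConsV (c t)) :
    EDRat r p c ↔
      ∃ u : Vec L → ℝ, ∃ d : ℝ, NiceUtility u ∧ 0 < d ∧ d ≤ 1 ∧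
        ∀ t, ∃ ξ : Vec L, Supergrad u (c t) ξ ∧
          (∀ j, d ^ (t : ℕ) * ξ j ≤ effP r p t j) ∧
          (∀ j, c t j ≠ 0 → d ^ (t : ℕ) * ξ j = effP r p t j) := by
  rcases Nat.eq_zero_or_pos L with hL0 | hL
  · exfalso
    have h0 : c 0 = 0 := by
      subst hL0
      exact PiLp.ext fun j => Fin.elim0 j
    exact (hc 0).2 h0
  · constructor
    · exact fun h => EDaux.forward p c r hr hp hc hL h
    · rintro ⟨u, d, hu, hd0, hd1, hξ⟩
      exact EDaux.backward p c r hr hp hc hL u d hu hd0 hd1 hξ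

end
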